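/- Let d ≥ 1 and let P be a finite set of at least d+2 points in ℝ^d. Then every point x in the convex hull of P lies in the convex hull of at least two distinct (d+1)-element subsets of P; that is, there exist subsets Q₁, Q₂ ⊆ P with Q₁ ≠ Q₂, |Q₁| = |Q₂| = d+1, x ∈ conv(Q₁) and x ∈ conv(Q₂). -/

import Mathlib

open Finset

/-- Pivot lemma: if `x` is in the convex hull of `t`, `p ∉ t`, and `insert p t` is affinely
dependent, then `x` is in the convex hull of `(insert p t).erase i₀` for some `i₀ ∈ t`. -/
lemma pivot_lemma {E : Type*} [AddCommGroup E] [Module ℝ E] [DecidableEq E]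
    {t : Finset E} {p : E} (hp : p ∉ t)
    (h : ¬AffineIndependent ℝ ((↑) : ↥(insert p t) → E))
    {x : E} (m : x ∈ convexHull ℝ (t : Set E)) :
    ∃ i₀ ∈ t, x ∈ convexHull ℝ (((insert p t).erase i₀ : Finset E) : Set E) := by
  set S : Finset E := insert p t with hS
  rw [Finset.convexHull_eq] at m
  obtain ⟨f, fpos, fsum, hxf⟩ := m
  -- extend f to S with value 0 at p
  set f' : E → ℝ := fun z => if z = p then 0 else f z with hf'
  have f'pos : ∀ e ∈ S, 0 ≤ f' e := by
    intro e he
    by_cases hep : e = p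
    · simp [hf', hep]
    · rw [hS, mem_insert] at he
      simp only [hf', if_neg hep]
      exact fpos e (he.resolve_left hep)
  have f't : ∀ e ∈ t, f' e = f e := by
    intro e he
    have : e ≠ p := fun h => hp (h ▸ he)
    simp [hf', this]
  have f'sum : ∑ e ∈ S, f' e = 1 := by
    rw [hS, sum_insert hp]
    simp only [hf', if_pos rfl, zero_add]
    rw [← fsum]
    exact Finset.sum_congr rfl fun e he => by
      have : e ≠ p := fun h => hp (h ▸ he); simp [this]
  have f'combo : ∑ e ∈ S, f' e • e = x := by
    rw [hS, sum_insert hp]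
    simp only [hf', if_pos rfl, zero_smul, zero_add]
    have : ∑ e ∈ t, (fun z => if z = p then 0 else f z) e • e = ∑ e ∈ t, f e • e := by
      refine Finset.sum_congr rfl fun e he => ?_
      have : e ≠ p := fun h => hp (h ▸ he); simp [this]
    rw [this, ← hxf, Finset.centerMass_eq_of_sum_1 _ id fsum]
    rfl
  -- affine dependence, normalized so that g p ≤ 0
  obtain ⟨g, gcombo, gsum, gex, hgp⟩ :
      ∃ g : E → ℝ, ∑ e ∈ S, g e • e = 0 ∧ ∑ e ∈ S, g e = 0 ∧ (∃ z ∈ S, g z ≠ 0) ∧ g p ≤ 0 := by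
    obtain ⟨g, gcombo, gsum, gex⟩ := exists_nontrivial_relation_sum_zero_of_not_affine_ind h
    rcases le_or_gt (g p) 0 with hgp | hgp
    · exact ⟨g, gcombo, gsum, gex, hgp⟩
    · refine ⟨fun z => -g z, ?_, ?_, ?_, by simpa using hgp.le⟩
      · simpa [neg_smul] using congrArg Neg.neg gcombo
      · simpa using congrArg Neg.neg gsum
      · obtain ⟨z, hz, hgz⟩ := gex
        exact ⟨z, hz, by simpa using hgz⟩
  -- there is a positive coefficient, necessarily in t
  have gpos : ∃ i ∈ t, 0 < g i := by
    obtain ⟨i, hi, hgi⟩ := Finset.exists_pos_of_sum_zero_of_exists_nonzero g gsum gex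
    have hip : i ≠ p := fun h => absurd (h ▸ hgi) (not_lt.2 hgp)
    rw [hS, mem_insert] at hi
    exact ⟨i, hi.resolve_left hip, hgi⟩
  set s : Finset E := {z ∈ t | 0 < g z} with hs
  obtain ⟨i₀, memi, w⟩ : ∃ i₀ ∈ s, ∀ i ∈ s, f' i₀ / g i₀ ≤ f' i / g i := by
    apply s.exists_min_image fun z => f' z / g z
    obtain ⟨i, hi, hgi⟩ := gpos
    exact ⟨i, mem_filter.mpr ⟨hi, hgi⟩⟩
  have hi₀t : i₀ ∈ t := (mem_filter.mp memi).1
  have hg : 0 < g i₀ := (mem_filter.mp memi).2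
  have hi₀S : i₀ ∈ S := by rw [hS, mem_insert]; exact Or.inr hi₀t
  have hc : 0 ≤ f' i₀ / g i₀ := div_nonneg (f'pos i₀ hi₀S) hg.le
  set k : E → ℝ := fun z => f' z - f' i₀ / g i₀ * g z with hk'
  have hk : k i₀ = 0 := by rw [hk']; simp [div_mul_cancel₀ _ (ne_of_gt hg)]
  have ksum : ∑ e ∈ S.erase i₀, k e = 1 := by
    have : ∑ e ∈ S.erase i₀, k e = ∑ e ∈ S, k e := by
      conv_rhs => rw [← insert_erase hi₀S, sum_insert (notMem_erase i₀ S), hk, zero_add]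
    rw [this]
    simp only [hk', sum_sub_distrib, f'sum, ← mul_sum, gsum, mul_zero, sub_zero]
  have knn : ∀ e ∈ S.erase i₀, 0 ≤ k e := by
    intro e he
    have heS : e ∈ S := mem_of_mem_erase he
    rcases le_or_gt (g e) 0 with hge | hge
    · have : 0 ≤ -(f' i₀ / g i₀ * g e) :=
        neg_nonneg.mpr (mul_nonpos_of_nonneg_of_nonpos hc hge)
      have := add_nonneg (f'pos e heS) this
      simpa [hk', sub_eq_add_neg] using this
    · have hep : e ≠ p := fun h => absurd (h ▸ hge) (not_lt.2 hgp)
      have het : e ∈ t := by rw [hS, mem_insert] at heS; exact heS.resolve_left hep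
      have hes : e ∈ s := mem_filter.mpr ⟨het, hge⟩
      have := w e hes
      rw [div_le_div_iff₀ hg hge] at this
      simp only [hk', sub_nonneg]
      rw [← le_div_iff₀ hge]
      exact w e hes
  have kcombo : ∑ e ∈ S.erase i₀, k e • e = x := by
    have h1 : ∑ e ∈ S.erase i₀, k e • e = ∑ e ∈ S, k e • e :=
      sum_erase _ (by rw [hk, zero_smul])
    rw [h1]
    simp only [hk', sub_smul, mul_smul, sum_sub_distrib, f'combo, ← smul_sum, gcombo,
      smul_zero, sub_zero]
  refine ⟨i₀, hi₀t, ?_⟩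
  rw [Finset.convexHull_eq]
  exact ⟨k, knn, ksum, by rw [Finset.centerMass_eq_of_sum_1 _ id ksum]; exact kcombo⟩

/-- Every point in the convex hull of a finite set `P` of at least `d+2` points in `ℝ^d`
lies in the convex hull of at least two distinct `(d+1)`-element subsets of `P`. -/
theorem caratheodory_two_subsets (d : ℕ) (hd : 1 ≤ d)
    (P : Finset (Fin d → ℝ)) (hP : d + 2 ≤ P.card)
    (x : Fin d → ℝ) (hx : x ∈ convexHull ℝ (P : Set (Fin d → ℝ))) :
    ∃ Q₁ Q₂ : Finset (Fin d → ℝ), Q₁ ⊆ P ∧ Q₂ ⊆ P ∧ Q₁ ≠ Q₂ ∧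
      Q₁.card = d + 1 ∧ Q₂.card = d + 1 ∧
      x ∈ convexHull ℝ (Q₁ : Set (Fin d → ℝ)) ∧
      x ∈ convexHull ℝ (Q₂ : Set (Fin d → ℝ)) := by
  classical
  rw [convexHull_eq_union] at hx
  simp only [Set.mem_iUnion] at hx
  obtain ⟨t, hts, hai, hxt⟩ := hx
  have htP : t ⊆ P := by exact_mod_cast hts
  have hcard : t.card ≤ d + 1 := by
    have := hai.card_le_finrank_succ
    rw [Fintype.card_coe] at this
    refine this.trans ?_
    have h1 : Module.finrank ℝ (vectorSpan ℝ (Set.range ((↑) : t → Fin d → ℝ)))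
        ≤ Module.finrank ℝ (Fin d → ℝ) := Submodule.finrank_le _
    have h2 : Module.finrank ℝ (Fin d → ℝ) = d := by simp
    omega
  rcases eq_or_lt_of_le hcard with heq | hlt
  · -- t has exactly d+1 elements
    obtain ⟨p, hpP, hpt⟩ : ∃ p ∈ P, p ∉ t := by
      by_contra hcon
      push_neg at hcon
      have := Finset.card_le_card hcon
      omega
    have hnotai : ¬AffineIndependent ℝ ((↑) : ↥(insert p t) → Fin d → ℝ) := by
      intro hai'
      have := hai'.card_le_finrank_succ
      rw [Fintype.card_coe, Finset.card_insert_of_notMem hpt] at this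
      have h1 : Module.finrank ℝ (vectorSpan ℝ
          (Set.range ((↑) : ↥(insert p t) → Fin d → ℝ)))
          ≤ Module.finrank ℝ (Fin d → ℝ) := Submodule.finrank_le _
      have h2 : Module.finrank ℝ (Fin d → ℝ) = d := by simp
      omega
    obtain ⟨i₀, hi₀t, hxQ₂⟩ := pivot_lemma hpt hnotai hxt
    refine ⟨t, (insert p t).erase i₀, htP, ?_, ?_, heq, ?_, hxt, hxQ₂⟩
    · intro z hz
      have := mem_of_mem_erase hz
      rw [mem_insert] at this
      rcases this with h | h
      · exact h ▸ hpP
      · exact htP h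
    · intro hEq
      have hpmem : p ∈ (insert p t).erase i₀ :=
        mem_erase.mpr ⟨fun h => hpt (h ▸ hi₀t), mem_insert_self p t⟩
      rw [← hEq] at hpmem
      exact hpt hpmem
    · rw [card_erase_of_mem (mem_insert_of_mem hi₀t), card_insert_of_notMem hpt, heq]
      omega
  · -- t has at most d elements
    have hcard' : t.card ≤ d := by omega
    obtain ⟨Q₁, htQ₁, hQ₁P, hQ₁card⟩ :=
      Finset.exists_subsuperset_card_eq htP (by omega : t.card ≤ d + 1) (by omega)
    obtain ⟨p, hpP, hpQ₁⟩ : ∃ p ∈ P, p ∉ Q₁ := by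
      by_contra hcon
      push_neg at hcon
      have := Finset.card_le_card hcon
      omega
    obtain ⟨q, hqQ₁, hqt⟩ : ∃ q ∈ Q₁, q ∉ t := by
      by_contra hcon
      push_neg at hcon
      have := Finset.card_le_card hcon
      omega
    refine ⟨Q₁, insert p (Q₁.erase q), hQ₁P, ?_, ?_, hQ₁card, ?_, ?_, ?_⟩
    · intro z hz
      rw [mem_insert] at hz
      rcases hz with h | h
      · exact h ▸ hpP
      · exact hQ₁P (mem_of_mem_erase h)
    · intro hEq
      have : p ∈ Q₁ := hEq ▸ mem_insert_self p _
      exact hpQ₁ this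
    · rw [card_insert_of_notMem (fun h => hpQ₁ (mem_of_mem_erase h)),
        card_erase_of_mem hqQ₁, hQ₁card]
      omega
    · exact convexHull_mono (by exact_mod_cast htQ₁) hxt
    · refine convexHull_mono ?_ hxt
      intro z hz
      have hzt : z ∈ t := hz
      have : z ∈ Q₁.erase q := mem_erase.mpr ⟨fun h => hqt (h ▸ hzt), htQ₁ hzt⟩
      exact_mod_cast mem_insert_of_mem this
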